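/- (Olkin–Shepp matrix variance bound for the Gaussian.) Let X ~ N(μ, σ²) and let f, g : ℝ → ℝ be locally absolutely continuous with E[f(X)²] < ∞, E[g(X)²] < ∞, E[f'(X)²] < ∞ and E[g'(X)²] < ∞. Then the 2×2 matrix σ² · [[E[f'(X)²], E[f'(X)g'(X)]], [E[f'(X)g'(X)], E[g'(X)²]]] − [[Var[f(X)], Cov[f(X), g(X)]], [Cov[f(X), g(X)], Var[g(X)]]] is positive semidefinite. -/

import Mathlib

open MeasureTheory ProbabilityTheory

/-- `f` is locally absolutely continuous with a.e. derivative `f'`,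
expressed through the fundamental theorem of calculus. -/
def HasAEDeriv (f f' : ℝ → ℝ) : Prop :=
  ∀ x y : ℝ, IntervalIntegrable f' MeasureTheory.volume x y ∧
    f y - f x = ∫ t in x..y, f' t

open Real Set Filter Topology
open scoped NNReal ENNReal Interval

namespace OS


variable (m : ℝ) (v : ℝ≥0)

lemma gpdf_hasDerivAt (hv : v ≠ 0) (y : ℝ) :
    HasDerivAt (fun y => -(v : ℝ) * gaussianPDFReal m v y)
      ((y - m) * gaussianPDFReal m v y) y := by
  have hv' : (v : ℝ) ≠ 0 := by exact_mod_cast hv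
  have h1 : HasDerivAt (fun y : ℝ => -(y - m) ^ 2 / (2 * (v:ℝ)))
      (-(2 * (y - m)) / (2 * v)) y := by
    have := (((hasDerivAt_id y).sub_const m).pow 2).neg.div_const (2 * (v:ℝ))
    simpa using this
  have h2 := ((h1.exp.const_mul ((√(2 * π * (v:ℝ)))⁻¹)).const_mul (-(v:ℝ)))
  have h3 : (y - m) * gaussianPDFReal m v y
      = -(v:ℝ) * ((√(2 * π * (v:ℝ)))⁻¹ *
        (rexp (-(y - m)^2 / (2*(v:ℝ))) * (-(2 * (y - m)) / (2 * (v:ℝ))))) := by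
    unfold gaussianPDFReal
    field_simp
  rw [h3]; exact h2

lemma sub_sq_tendsto_atTop : Tendsto (fun y : ℝ => (y - m) ^ 2) atTop atTop := by
  have h : Tendsto (fun y : ℝ => y - m) atTop atTop :=
    tendsto_atTop_add_const_right _ (-m) tendsto_id |>.congr (by intro x; simp [sub_eq_add_neg, add_comm])
  exact (tendsto_pow_atTop two_ne_zero).comp h

lemma sub_sq_tendsto_atBot : Tendsto (fun y : ℝ => (y - m) ^ 2) atBot atTop := by
  have h : Tendsto (fun y : ℝ => m - y) atBot atTop :=
    tendsto_atTop_add_const_left _ m tendsto_neg_atBot_atTop |>.congr (by intro x; ring)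
  exact ((tendsto_pow_atTop two_ne_zero).comp h).congr (by intro x; simp; ring)

lemma gpdf_tendsto (hv : v ≠ 0) (l : Filter ℝ)
    (hl : Tendsto (fun y : ℝ => (y - m) ^ 2) l atTop) :
    Tendsto (fun y => -(v : ℝ) * gaussianPDFReal m v y) l (nhds 0) := by
  have hvpos : (0:ℝ) < v := lt_of_le_of_ne v.coe_nonneg (by exact_mod_cast (Ne.symm hv))
  have h1 : Tendsto (fun y : ℝ => -(y - m) ^ 2 / (2 * (v:ℝ))) l atBot := by
    apply Tendsto.atBot_div_const (by positivity)
    exact tendsto_neg_atBot_iff.mpr hl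
  have h2 : Tendsto (fun y => gaussianPDFReal m v y) l (nhds 0) := by
    have := (Real.tendsto_exp_atBot.comp h1).const_mul ((√(2 * π * (v:ℝ)))⁻¹)
    simpa [gaussianPDFReal_def, mul_zero] using this
  simpa using h2.const_mul (-(v:ℝ))

lemma integrable_sub_mul_gpdf : Integrable (fun y => (y - m) * gaussianPDFReal m v y) := by
  by_cases hv : v = 0
  · simp [hv]
  have hvpos : (0:ℝ) < v := lt_of_le_of_ne v.coe_nonneg (by exact_mod_cast (Ne.symm hv))
  have hb : (0:ℝ) < (2 * (v:ℝ))⁻¹ := by positivity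
  have h1 := (integrable_mul_exp_neg_mul_sq hb).comp_sub_right m
  have h2 := h1.const_mul ((√(2 * π * (v:ℝ)))⁻¹)
  apply h2.congr (Filter.Eventually.of_forall fun y => ?_)
  unfold gaussianPDFReal
  simp only
  rw [show -(2 * (v:ℝ))⁻¹ * (y - m)^2 = -(y - m)^2 / (2 * (v:ℝ)) by ring]
  ring

lemma integral_Ioi_gpdf (hv : v ≠ 0) (t : ℝ) :
    ∫ y in Ioi t, (y - m) * gaussianPDFReal m v y = v * gaussianPDFReal m v t := by
  have := integral_Ioi_of_hasDerivAt_of_tendsto'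
    (f := fun y => -(v:ℝ) * gaussianPDFReal m v y) (a := t)
    (fun x _ => gpdf_hasDerivAt m v hv x)
    ((integrable_sub_mul_gpdf m v).integrableOn)
    (gpdf_tendsto m v hv atTop (sub_sq_tendsto_atTop m))
  rw [this]; ring

lemma integral_Iio_gpdf (hv : v ≠ 0) (t : ℝ) :
    ∫ y in Iio t, (m - y) * gaussianPDFReal m v y = v * gaussianPDFReal m v t := by
  have h0 : ∫ y in Iic t, (y - m) * gaussianPDFReal m v y = -(v:ℝ) * gaussianPDFReal m v t := by
    have := integral_Iic_of_hasDerivAt_of_tendsto'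
      (f := fun y => -(v:ℝ) * gaussianPDFReal m v y) (a := t)
      (fun x _ => gpdf_hasDerivAt m v hv x)
      ((integrable_sub_mul_gpdf m v).integrableOn)
      (gpdf_tendsto m v hv atBot (sub_sq_tendsto_atBot m))
    rw [this]; ring
  have h1 : ∫ y in Iio t, (y - m) * gaussianPDFReal m v y
      = ∫ y in Iic t, (y - m) * gaussianPDFReal m v y := by
    refine setIntegral_congr_set ?_
    exact Iio_ae_eq_Iic
  have h2 : ∫ y in Iio t, (m - y) * gaussianPDFReal m v y
      = -∫ y in Iio t, (y - m) * gaussianPDFReal m v y := by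
    rw [← integral_neg]
    congr 1; funext y; ring
  rw [h2, h1, h0]; ring


variable (m : ℝ) (v : ℝ≥0)

lemma integral_gauss_eq (hv : v ≠ 0) (g : ℝ → ℝ) :
    ∫ x, g x ∂(gaussianReal m v) = ∫ x, gaussianPDFReal m v x * g x := by
  rw [gaussianReal_of_var_ne_zero m hv]
  have : gaussianPDF m v = fun x => ((gaussianPDFReal m v x).toNNReal : ℝ≥0∞) := rfl
  rw [this, integral_withDensity_eq_integral_smul
    ((measurable_gaussianPDFReal m v).real_toNNReal) g]
  congr 1; funext x
  rw [NNReal.smul_def, smul_eq_mul, Real.coe_toNNReal _ (gaussianPDFReal_nonneg m v x)]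

lemma integrable_gauss_iff (hv : v ≠ 0) (g : ℝ → ℝ) (hg : Measurable g) :
    Integrable g (gaussianReal m v) ↔
      Integrable (fun x => g x * gaussianPDFReal m v x) volume := by
  rw [gaussianReal_of_var_ne_zero m hv]
  rw [integrable_withDensity_iff (measurable_gaussianPDF m v)
    (Filter.Eventually.of_forall fun x => ENNReal.ofReal_lt_top)]
  constructor <;> intro h <;> apply h.congr (Filter.Eventually.of_forall fun x => ?_) <;>
    simp [gaussianPDF, ENNReal.toReal_ofReal (gaussianPDFReal_nonneg m v x)]

lemma gauss_meas_eq (hv : v ≠ 0) {s : Set ℝ} (hs : MeasurableSet s) :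
    gaussianReal m v s = ENNReal.ofReal (∫ x in s, gaussianPDFReal m v x) := by
  rw [gaussianReal_apply m hv s, ofReal_integral_eq_lintegral_ofReal]
  · rfl
  · exact (integrable_gaussianPDFReal m v).integrableOn
  · exact Filter.Eventually.of_forall fun x => gaussianPDFReal_nonneg m v x


variable (m : ℝ) (v : ℝ≥0)

lemma integrable_max_right (hv : v ≠ 0) (t : ℝ) :
    Integrable (fun y => max (y - t) 0) (gaussianReal m v) := by
  rw [integrable_gauss_iff m v hv _ (by measurability)]
  have hintegrable : Integrable
      (fun y => |(y - m) * gaussianPDFReal m v y| + |m - t| * gaussianPDFReal m v y) := by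
    exact (integrable_sub_mul_gpdf m v).abs.add
      ((integrable_gaussianPDFReal m v).const_mul _)
  refine hintegrable.mono' ?_ (Filter.Eventually.of_forall fun y => ?_)
  · exact ((measurable_id.sub_const t).max measurable_const).mul
      (measurable_gaussianPDFReal m v) |>.aestronglyMeasurable
  · have h0 : (0:ℝ) ≤ gaussianPDFReal m v y := gaussianPDFReal_nonneg m v y
    have : |max (y - t) 0| ≤ |y - m| + |m - t| := by
      rcases le_total (y - t) 0 with h | h
      · rw [max_eq_right h]; simp [abs_nonneg]; positivity
      · rw [max_eq_left h, abs_of_nonneg h]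
        calc y - t = (y - m) + (m - t) := by ring
        _ ≤ |y - m| + |m - t| := add_le_add (le_abs_self _) (le_abs_self _)
    calc ‖max (y - t) 0 * gaussianPDFReal m v y‖
        = |max (y - t) 0| * gaussianPDFReal m v y := by
          rw [Real.norm_eq_abs, abs_mul, abs_of_nonneg h0]
      _ ≤ (|y - m| + |m - t|) * gaussianPDFReal m v y := by
          apply mul_le_mul_of_nonneg_right this h0
      _ = |y - m| * gaussianPDFReal m v y + |m - t| * gaussianPDFReal m v y := by ring
      _ ≤ |(y - m) * gaussianPDFReal m v y| + |m - t| * gaussianPDFReal m v y := by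
          rw [abs_mul, abs_of_nonneg h0]

lemma integrable_max_left (hv : v ≠ 0) (t : ℝ) :
    Integrable (fun y => max (t - y) 0) (gaussianReal m v) := by
  rw [show (fun y => max (t - y) 0) = (fun y : ℝ => max (t - y) 0) from rfl,
    integrable_gauss_iff m v hv (fun y : ℝ => max (t - y) 0)
    (((measurable_const.sub measurable_id).max measurable_const))]
  have hintegrable : Integrable
      (fun y => |(y - m) * gaussianPDFReal m v y| + |m - t| * gaussianPDFReal m v y) := by
    exact (integrable_sub_mul_gpdf m v).abs.add
      ((integrable_gaussianPDFReal m v).const_mul _)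
  refine hintegrable.mono' ?_ (Filter.Eventually.of_forall fun y => ?_)
  · exact ((measurable_const.sub measurable_id).max measurable_const).mul
      (measurable_gaussianPDFReal m v) |>.aestronglyMeasurable
  · have h0 : (0:ℝ) ≤ gaussianPDFReal m v y := gaussianPDFReal_nonneg m v y
    have : |max (t - y) 0| ≤ |y - m| + |m - t| := by
      rcases le_total (t - y) 0 with h | h
      · rw [max_eq_right h]; simp [abs_nonneg]; positivity
      · rw [max_eq_left h, abs_of_nonneg h]
        calc t - y = -(y - m) + -(m - t) := by ring
        _ ≤ |y - m| + |m - t| := add_le_add (neg_le_abs _) (neg_le_abs _)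
    calc ‖max (t - y) 0 * gaussianPDFReal m v y‖
        = |max (t - y) 0| * gaussianPDFReal m v y := by
          rw [Real.norm_eq_abs, abs_mul, abs_of_nonneg h0]
      _ ≤ (|y - m| + |m - t|) * gaussianPDFReal m v y := by
          apply mul_le_mul_of_nonneg_right this h0
      _ = |y - m| * gaussianPDFReal m v y + |m - t| * gaussianPDFReal m v y := by ring
      _ ≤ |(y - m) * gaussianPDFReal m v y| + |m - t| * gaussianPDFReal m v y := by
          rw [abs_mul, abs_of_nonneg h0]

lemma integral_max_right (hv : v ≠ 0) (t : ℝ) :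
    ∫ y, max (y - t) 0 ∂(gaussianReal m v)
      = v * gaussianPDFReal m v t + (m - t) * ((gaussianReal m v) (Ioi t)).toReal := by
  rw [integral_gauss_eq m v hv]
  have h1 : (fun y => gaussianPDFReal m v y * max (y - t) 0)
      = Set.indicator (Ioi t) (fun y => (y - m) * gaussianPDFReal m v y
          + (m - t) * gaussianPDFReal m v y) := by
    funext y
    rcases le_or_gt y t with h | h
    · rw [Set.indicator_of_notMem (by simpa using h), max_eq_right (by linarith)]
      ring
    · rw [Set.indicator_of_mem (by simpa using h), max_eq_left (by linarith)]
      ring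
  rw [h1, integral_indicator measurableSet_Ioi, integral_add
      ((integrable_sub_mul_gpdf m v).integrableOn)
      (((integrable_gaussianPDFReal m v).const_mul _).integrableOn),
    integral_Ioi_gpdf m v hv t, integral_const_mul,
    gauss_meas_eq m v hv measurableSet_Ioi,
    ENNReal.toReal_ofReal (setIntegral_nonneg measurableSet_Ioi
      (fun x _ => gaussianPDFReal_nonneg m v x))]

lemma integral_max_left (hv : v ≠ 0) (t : ℝ) :
    ∫ y, max (t - y) 0 ∂(gaussianReal m v)
      = v * gaussianPDFReal m v t + (t - m) * ((gaussianReal m v) (Iio t)).toReal := by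
  rw [integral_gauss_eq m v hv]
  have h1 : (fun y => gaussianPDFReal m v y * max (t - y) 0)
      = Set.indicator (Iio t) (fun y => (m - y) * gaussianPDFReal m v y
          + (t - m) * gaussianPDFReal m v y) := by
    funext y
    rcases le_or_gt t y with h | h
    · rw [Set.indicator_of_notMem (by simpa using h), max_eq_right (by linarith)]
      ring
    · rw [Set.indicator_of_mem (by simpa using h), max_eq_left (by linarith)]
      ring
  have h2 : Integrable (fun y => (m - y) * gaussianPDFReal m v y) := by
    have := (integrable_sub_mul_gpdf m v).neg
    apply this.congr (Filter.Eventually.of_forall fun y => by simp only [Pi.neg_apply]; ring)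
  rw [h1, integral_indicator measurableSet_Iio, integral_add
      (h2.integrableOn)
      (((integrable_gaussianPDFReal m v).const_mul _).integrableOn),
    integral_Iio_gpdf m v hv t, integral_const_mul,
    gauss_meas_eq m v hv measurableSet_Iio,
    ENNReal.toReal_ofReal (setIntegral_nonneg measurableSet_Iio
      (fun x _ => gaussianPDFReal_nonneg m v x))]


variable (m : ℝ) (v : ℝ≥0)

lemma ofReal_max (a : ℝ) : ENNReal.ofReal (max a 0) = ENNReal.ofReal a := by
  rcases le_total a 0 with h | h
  · rw [max_eq_right h, ENNReal.ofReal_zero, eq_comm, ENNReal.ofReal_eq_zero.2 h]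
  · rw [max_eq_left h]

lemma gauss_singleton (hv : v ≠ 0) (t : ℝ) : gaussianReal m v {t} = 0 :=
  gaussianReal_absolutelyContinuous m hv (measure_singleton (μ := volume) t)

lemma W_eval (hv : v ≠ 0) (t : ℝ) :
    ∫⁻ z : ℝ × ℝ, (Ι z.1 z.2).indicator (fun _ => ENNReal.ofReal |z.1 - z.2|) t
        ∂((gaussianReal m v).prod (gaussianReal m v))
      = ENNReal.ofReal (2 * v * gaussianPDFReal m v t) := by
  set μ := gaussianReal m v with hμ
  set c : ℝ := ∫ y, max (y - t) 0 ∂μ with hc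
  set d : ℝ := ∫ y, max (t - y) 0 ∂μ with hd
  have hcnn : 0 ≤ c := integral_nonneg fun y => le_max_right _ _
  have hdnn : 0 ≤ d := integral_nonneg fun y => le_max_right _ _
  -- the four building blocks
  set u : ℝ → ℝ≥0∞ := fun x => ENNReal.ofReal (t - x) with hu
  set w : ℝ → ℝ≥0∞ := fun x => ENNReal.ofReal (x - t) with hw
  set i : ℝ → ℝ≥0∞ := fun x => (Ici t).indicator 1 x with hi
  set j : ℝ → ℝ≥0∞ := fun x => (Iio t).indicator 1 x with hj
  have humeas : Measurable u := by
    exact (measurable_const.sub measurable_id).ennreal_ofReal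
  have hwmeas : Measurable w := (measurable_id.sub_const t).ennreal_ofReal
  have himeas : Measurable i := measurable_one.indicator measurableSet_Ici
  have hjmeas : Measurable j := measurable_one.indicator measurableSet_Iio
  -- pointwise identity
  have i_pos : ∀ z, t ≤ z → i z = 1 := fun z h => by
    simp [hi, Set.indicator_of_mem, Set.mem_Ici.2 h]
  have i_neg : ∀ z, z < t → i z = 0 := fun z h => by
    simp [hi, Set.indicator_apply, Set.mem_Ici, not_le.2 h]
  have j_pos : ∀ z, z < t → j z = 1 := fun z h => by
    simp [hj, Set.indicator_of_mem, Set.mem_Iio.2 h]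
  have j_neg : ∀ z, t ≤ z → j z = 0 := fun z h => by
    simp [hj, Set.indicator_apply, Set.mem_Iio, not_lt.2 h]
  have u_zero : ∀ z, t ≤ z → u z = 0 := fun z h => by
    simp [hu, ENNReal.ofReal_of_nonpos, sub_nonpos.2 h]
  have w_zero : ∀ z, z ≤ t → w z = 0 := fun z h => by
    simp [hw, ENNReal.ofReal_of_nonpos, sub_nonpos.2 h]
  have hpt : ∀ x y : ℝ, (Ι x y).indicator (fun _ => ENNReal.ofReal |x - y|) t
      = u x * i y + j x * w y + u y * i x + j y * w x := by
    intro x y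
    rcases lt_or_ge x t with hx | hx <;> rcases lt_or_ge y t with hy | hy
    · have hnot : t ∉ Ι x y := by
        rw [Set.uIoc, Set.mem_Ioc]
        rintro ⟨-, h2⟩
        exact absurd h2 (not_le.2 (max_lt hx hy))
      rw [Set.indicator_of_notMem hnot, i_neg y hy, j_pos x hx, w_zero y hy.le,
        i_neg x hx, j_pos y hy, w_zero x hx.le]
      simp
    · have hmem : t ∈ Ι x y := by
        rw [Set.uIoc, Set.mem_Ioc]
        exact ⟨lt_of_le_of_lt (min_le_left x y) hx, le_trans hy (le_max_right x y)⟩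
      rw [Set.indicator_of_mem hmem, i_pos y hy, j_pos x hx, u_zero y hy, j_neg y hy]
      have habs : |x - y| = (t - x) + (y - t) := by
        rw [abs_sub_comm, abs_of_nonneg (by linarith)]; ring
      simp only [habs, mul_one, one_mul, zero_mul, mul_zero, add_zero]
      rw [ENNReal.ofReal_add (by linarith) (by linarith)]
    · have hmem : t ∈ Ι x y := by
        rw [Set.uIoc, Set.mem_Ioc]
        exact ⟨lt_of_le_of_lt (min_le_right x y) hy, le_trans hx (le_max_left x y)⟩
      rw [Set.indicator_of_mem hmem, i_pos x hx, j_pos y hy, u_zero x hx, j_neg x hx]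
      have habs : |x - y| = (t - y) + (x - t) := by
        rw [abs_of_nonneg (by linarith)]; ring
      simp only [habs, mul_one, one_mul, zero_mul, mul_zero, add_zero, zero_add]
      rw [ENNReal.ofReal_add (by linarith) (by linarith), add_comm]
    · have hnot : t ∉ Ι x y := by
        rw [Set.uIoc, Set.mem_Ioc]
        rintro ⟨h1, -⟩
        exact absurd h1 (not_lt.2 (le_min hx hy))
      rw [Set.indicator_of_notMem hnot, u_zero x hx, u_zero y hy, j_neg x hx, j_neg y hy]
      simp
  -- lintegrals of the blocks
  have hU : ∫⁻ x, u x ∂μ = ENNReal.ofReal d := by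
    rw [hd, ofReal_integral_eq_lintegral_ofReal (integrable_max_left m v hv t)
      (Filter.Eventually.of_forall fun y => le_max_right _ _)]
    exact lintegral_congr fun x => (ofReal_max (t - x)).symm
  have hW : ∫⁻ x, w x ∂μ = ENNReal.ofReal c := by
    rw [hc, ofReal_integral_eq_lintegral_ofReal (integrable_max_right m v hv t)
      (Filter.Eventually.of_forall fun y => le_max_right _ _)]
    exact lintegral_congr fun x => (ofReal_max (x - t)).symm
  have hI : ∫⁻ x, i x ∂μ = μ (Ici t) := lintegral_indicator_one measurableSet_Ici
  have hJ : ∫⁻ x, j x ∂μ = μ (Iio t) := lintegral_indicator_one measurableSet_Iio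
  -- compute the product integral
  have hsplit : ∫⁻ z : ℝ × ℝ, (Ι z.1 z.2).indicator (fun _ => ENNReal.ofReal |z.1 - z.2|) t
      ∂(μ.prod μ)
      = (∫⁻ x, u x ∂μ) * (∫⁻ x, i x ∂μ) + (∫⁻ x, j x ∂μ) * (∫⁻ x, w x ∂μ)
        + (∫⁻ x, i x ∂μ) * (∫⁻ x, u x ∂μ) + (∫⁻ x, w x ∂μ) * (∫⁻ x, j x ∂μ) := by
    have e1 : ∫⁻ z : ℝ × ℝ, u z.1 * i z.2 ∂(μ.prod μ) = (∫⁻ x, u x ∂μ) * ∫⁻ x, i x ∂μ :=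
      lintegral_prod_mul humeas.aemeasurable himeas.aemeasurable
    have e2 : ∫⁻ z : ℝ × ℝ, j z.1 * w z.2 ∂(μ.prod μ) = (∫⁻ x, j x ∂μ) * ∫⁻ x, w x ∂μ :=
      lintegral_prod_mul hjmeas.aemeasurable hwmeas.aemeasurable
    have e3 : ∫⁻ z : ℝ × ℝ, u z.2 * i z.1 ∂(μ.prod μ) = (∫⁻ x, i x ∂μ) * ∫⁻ x, u x ∂μ := by
      have := lintegral_prod_mul (μ := μ) (ν := μ) himeas.aemeasurable humeas.aemeasurable
      rw [← this]
      exact lintegral_congr fun z => mul_comm _ _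
    have e4 : ∫⁻ z : ℝ × ℝ, j z.2 * w z.1 ∂(μ.prod μ) = (∫⁻ x, w x ∂μ) * ∫⁻ x, j x ∂μ := by
      have := lintegral_prod_mul (μ := μ) (ν := μ) hwmeas.aemeasurable hjmeas.aemeasurable
      rw [← this]
      exact lintegral_congr fun z => mul_comm _ _
    rw [← e1, ← e2, ← e3, ← e4]
    rw [← lintegral_add_left (by fun_prop), ← lintegral_add_left (by fun_prop),
      ← lintegral_add_left (by fun_prop)]
    exact lintegral_congr fun z => hpt z.1 z.2
  rw [hsplit, hU, hW, hI, hJ]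
  -- now the arithmetic
  have hIci : μ (Ici t) = μ (Ioi t) := by
    rw [← Set.Ioi_union_left, measure_union (by simp) (measurableSet_singleton t),
      gauss_singleton m v hv t, add_zero]
  set A : ℝ := (μ (Iio t)).toReal with hA
  set B : ℝ := (μ (Ioi t)).toReal with hB
  have hAnn : 0 ≤ A := ENNReal.toReal_nonneg
  have hBnn : 0 ≤ B := ENNReal.toReal_nonneg
  have hABfin : μ (Iio t) ≠ ⊤ := measure_ne_top μ _
  have hABfin' : μ (Ioi t) ≠ ⊤ := measure_ne_top μ _
  have hAB : A + B = 1 := by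
    have : μ (Iio t) + μ (Ioi t) = 1 := by
      rw [← measure_union (by
          simp only [Set.disjoint_left]
          intro a ha ha'
          exact absurd (lt_trans (Set.mem_Iio.1 ha) (Set.mem_Ioi.1 ha')) (lt_irrefl _)) measurableSet_Ioi,
        Set.Iio_union_Ioi, measure_compl (measurableSet_singleton t) (measure_ne_top μ _),
        gauss_singleton m v hv t]
      simp
    rw [hA, hB, ← ENNReal.toReal_add hABfin hABfin', this, ENNReal.toReal_one]
  have hc' : c = v * gaussianPDFReal m v t + (m - t) * B := integral_max_right m v hv t
  have hd' : d = v * gaussianPDFReal m v t + (t - m) * A := integral_max_left m v hv t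
  rw [hIci]
  rw [show μ (Ioi t) = ENNReal.ofReal B by rw [hB, ENNReal.ofReal_toReal hABfin'],
    show μ (Iio t) = ENNReal.ofReal A by rw [hA, ENNReal.ofReal_toReal hABfin] ]
  rw [← ENNReal.ofReal_mul hdnn, ← ENNReal.ofReal_mul hAnn, ← ENNReal.ofReal_mul hBnn,
    ← ENNReal.ofReal_mul hcnn, ← ENNReal.ofReal_add (by positivity) (by positivity),
    ← ENNReal.ofReal_add (by positivity) (by positivity),
    ← ENNReal.ofReal_add (by positivity) (by positivity)]
  congr 1
  rw [hc', hd']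
  linear_combination (2 * (v:ℝ) * gaussianPDFReal m v t) * hAB


lemma cs_lintegral (ρ : Measure ℝ) (g : ℝ → ℝ≥0∞) (hg : AEMeasurable g ρ) :
    (∫⁻ a, g a ∂ρ) * (∫⁻ a, g a ∂ρ) ≤ ρ Set.univ * ∫⁻ a, g a * g a ∂ρ := by
  have hpq : Real.HolderConjugate 2 2 := Real.HolderConjugate.two_two
  have h := ENNReal.lintegral_mul_le_Lp_mul_Lq ρ hpq aemeasurable_const hg
    (f := fun _ => (1 : ℝ≥0∞)) (g := g)
  simp only [Pi.mul_apply, one_mul] at h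
  have h1 : ∫⁻ a, (1:ℝ≥0∞) ^ (2:ℝ) ∂ρ = ρ Set.univ := by simp
  rw [h1] at h
  calc (∫⁻ a, g a ∂ρ) * (∫⁻ a, g a ∂ρ)
      ≤ ((ρ Set.univ) ^ (1/(2:ℝ)) * (∫⁻ a, g a ^ (2:ℝ) ∂ρ) ^ (1/(2:ℝ)))
        * ((ρ Set.univ) ^ (1/(2:ℝ)) * (∫⁻ a, g a ^ (2:ℝ) ∂ρ) ^ (1/(2:ℝ))) :=
        mul_le_mul' h h
    _ = ((ρ Set.univ) ^ (1/(2:ℝ)) * (ρ Set.univ) ^ (1/(2:ℝ)))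
        * ((∫⁻ a, g a ^ (2:ℝ) ∂ρ) ^ (1/(2:ℝ)) * (∫⁻ a, g a ^ (2:ℝ) ∂ρ) ^ (1/(2:ℝ))) := by
        ring
    _ = ρ Set.univ * ∫⁻ a, g a ^ (2:ℝ) ∂ρ := by
        have hsq : ∀ a : ℝ≥0∞, a ^ (1/(2:ℝ)) * a ^ (1/(2:ℝ)) = a := by
          intro a
          calc a ^ (1/(2:ℝ)) * a ^ (1/(2:ℝ)) = (a ^ (1/(2:ℝ))) ^ (2:ℕ) := by ring
            _ = (a ^ (1/(2:ℝ))) ^ ((2:ℕ):ℝ) := (ENNReal.rpow_natCast _ 2).symm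
            _ = a ^ ((1/(2:ℝ)) * ((2:ℕ):ℝ)) := (ENNReal.rpow_mul _ _ _).symm
            _ = a := by norm_num
        rw [hsq, hsq]
    _ = ρ Set.univ * ∫⁻ a, g a * g a ∂ρ := by
        congr 1
        refine lintegral_congr fun a => ?_
        rw [show (2:ℝ) = ((2:ℕ):ℝ) by norm_num, ENNReal.rpow_natCast]
        ring

lemma hquad (h h' : ℝ → ℝ) (hm' : Measurable h') (hAC : HasAEDeriv h h') (x y : ℝ) :
    ENNReal.ofReal ((h x - h y)^2)
      ≤ ENNReal.ofReal |x - y| * ∫⁻ t in Ι x y, ENNReal.ofReal (h' t ^ 2) := by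
  obtain ⟨hII, hFTC⟩ := hAC x y
  have habs : |∫ t in x..y, h' t| ≤ ∫ t in Ι x y, |h' t| := by
    simpa [Real.norm_eq_abs] using intervalIntegral.norm_integral_le_integral_norm_uIoc
      (f := h') (a := x) (b := y) (μ := volume)
  have hIOn : IntegrableOn (fun t => |h' t|) (Ι x y) volume :=
    (intervalIntegrable_iff.1 hII).abs
  have h1 : ENNReal.ofReal ((h x - h y)^2)
      = ENNReal.ofReal |∫ t in x..y, h' t| * ENNReal.ofReal |∫ t in x..y, h' t| := by
    rw [← ENNReal.ofReal_mul (abs_nonneg _), abs_mul_abs_self, ← hFTC]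
    congr 1; ring
  have h2 : ENNReal.ofReal |∫ t in x..y, h' t|
      ≤ ∫⁻ t in Ι x y, ENNReal.ofReal |h' t| := by
    refine le_trans (ENNReal.ofReal_le_ofReal habs) ?_
    rw [ofReal_integral_eq_lintegral_ofReal hIOn
      (Filter.Eventually.of_forall fun t => abs_nonneg _)]
  have h3 := cs_lintegral (volume.restrict (Ι x y)) (fun t => ENNReal.ofReal |h' t|)
    hm'.abs.ennreal_ofReal.aemeasurable
  have hvol : volume.restrict (Ι x y) Set.univ = ENNReal.ofReal |x - y| := by
    rw [Measure.restrict_apply MeasurableSet.univ, Set.univ_inter, Set.uIoc, Real.volume_Ioc]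
    congr 1
    rw [max_sub_min_eq_abs, abs_sub_comm]
  have h4 : ∀ t : ℝ, ENNReal.ofReal |h' t| * ENNReal.ofReal |h' t|
      = ENNReal.ofReal (h' t ^ 2) := fun t => by
    rw [← ENNReal.ofReal_mul (abs_nonneg _), abs_mul_abs_self, sq]
  calc ENNReal.ofReal ((h x - h y)^2)
      = ENNReal.ofReal |∫ t in x..y, h' t| * ENNReal.ofReal |∫ t in x..y, h' t| := h1
    _ ≤ (∫⁻ t in Ι x y, ENNReal.ofReal |h' t|) * ∫⁻ t in Ι x y, ENNReal.ofReal |h' t| :=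
        mul_le_mul' h2 h2
    _ ≤ volume.restrict (Ι x y) Set.univ
        * ∫⁻ t in Ι x y, ENNReal.ofReal |h' t| * ENNReal.ofReal |h' t| := h3
    _ = ENNReal.ofReal |x - y| * ∫⁻ t in Ι x y, ENNReal.ofReal (h' t ^ 2) := by
        rw [hvol]
        congr 1
        exact lintegral_congr fun t => h4 t



lemma poincare (m : ℝ) (v : ℝ≥0) (hv : v ≠ 0) (h h' : ℝ → ℝ)
    (hm : Measurable h) (hm' : Measurable h') (hAC : HasAEDeriv h h')
    (h2 : Integrable (fun x => h x ^ 2) (gaussianReal m v))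
    (h'2 : Integrable (fun x => h' x ^ 2) (gaussianReal m v)) :
    (∫ x, h x ^ 2 ∂(gaussianReal m v)) - (∫ x, h x ∂(gaussianReal m v)) ^ 2
      ≤ (v:ℝ) * ∫ x, h' x ^ 2 ∂(gaussianReal m v) := by
  set μ := gaussianReal m v with hμ
  set pp := μ.prod μ with hpp
  have hInt : Integrable h μ :=
    ((memLp_two_iff_integrable_sq hm.aestronglyMeasurable).2 h2).integrable (by norm_num)
  have hprod : Integrable (fun z : ℝ × ℝ => h z.1 * h z.2) pp := hInt.mul_prod hInt
  have hsq1 : Integrable (fun z : ℝ × ℝ => h z.1 ^ 2) pp := by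
    have := h2.mul_prod (integrable_const (1:ℝ)) (ν := μ); simpa using this
  have hsq2 : Integrable (fun z : ℝ × ℝ => h z.2 ^ 2) pp := by
    have := (integrable_const (1:ℝ)).mul_prod h2 (μ := μ); simpa using this
  -- variance identity
  have varid : ∫ z, (h z.1 - h z.2)^2 ∂pp
      = 2 * ((∫ x, h x ^ 2 ∂μ) - (∫ x, h x ∂μ) ^ 2) := by
    have e1 : ∫ z, (h z.1 - h z.2)^2 ∂pp
        = ∫ z : ℝ × ℝ, (h z.1 ^ 2 + h z.2 ^ 2 - 2 * (h z.1 * h z.2)) ∂pp := by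
      congr 1; funext z; ring
    have p1 : ∫ z : ℝ × ℝ, h z.1 ^ 2 ∂pp = ∫ x, h x ^ 2 ∂μ := by
      have := integral_prod_mul (μ := μ) (ν := μ) (fun x => h x ^ 2) (fun _ => (1:ℝ))
      simpa using this
    have p2 : ∫ z : ℝ × ℝ, h z.2 ^ 2 ∂pp = ∫ x, h x ^ 2 ∂μ := by
      have := integral_prod_mul (μ := μ) (ν := μ) (fun _ => (1:ℝ)) (fun x => h x ^ 2)
      simpa using this
    have p3 : ∫ z : ℝ × ℝ, h z.1 * h z.2 ∂pp = (∫ x, h x ∂μ) ^ 2 := by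
      have := integral_prod_mul (μ := μ) (ν := μ) h h
      rw [sq]; exact this
    calc ∫ z, (h z.1 - h z.2)^2 ∂pp
        = ∫ z : ℝ × ℝ, (h z.1 ^ 2 + h z.2 ^ 2 - 2 * (h z.1 * h z.2)) ∂pp := e1
      _ = (∫ z : ℝ × ℝ, (h z.1 ^ 2 + h z.2 ^ 2) ∂pp) - ∫ z : ℝ × ℝ, 2 * (h z.1 * h z.2) ∂pp :=
          integral_sub (hsq1.add hsq2) (hprod.const_mul 2)
      _ = ((∫ z : ℝ × ℝ, h z.1 ^ 2 ∂pp) + ∫ z : ℝ × ℝ, h z.2 ^ 2 ∂pp)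
            - 2 * ∫ z : ℝ × ℝ, h z.1 * h z.2 ∂pp := by
          rw [integral_add hsq1 hsq2, integral_const_mul]
      _ = 2 * ((∫ x, h x ^ 2 ∂μ) - (∫ x, h x ∂μ) ^ 2) := by rw [p1, p2, p3]; ring
  -- convert to lintegral
  have hmeasprod : Measurable (fun z : ℝ × ℝ => (h z.1 - h z.2)^2) :=
    ((hm.comp measurable_fst).sub (hm.comp measurable_snd)).pow_const 2
  have eqlint : ∫ z, (h z.1 - h z.2)^2 ∂pp
      = (∫⁻ z, ENNReal.ofReal ((h z.1 - h z.2)^2) ∂pp).toReal := by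
    rw [integral_eq_lintegral_of_nonneg_ae
      (Filter.Eventually.of_forall fun z => sq_nonneg _) hmeasprod.aestronglyMeasurable]
  -- the main lintegral bound
  have step1 : ∫⁻ z, ENNReal.ofReal ((h z.1 - h z.2)^2) ∂pp
      ≤ ∫⁻ z : ℝ × ℝ, (ENNReal.ofReal |z.1 - z.2|
          * ∫⁻ t in Ι z.1 z.2, ENNReal.ofReal (h' t ^ 2)) ∂pp :=
    lintegral_mono fun z => hquad h h' hm' hAC z.1 z.2
  have hind_meas : Measurable (fun t : ℝ => ENNReal.ofReal (h' t ^ 2)) :=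
    (hm'.pow_const 2).ennreal_ofReal
  have step2 : ∀ z : ℝ × ℝ, ENNReal.ofReal |z.1 - z.2|
      * ∫⁻ t in Ι z.1 z.2, ENNReal.ofReal (h' t ^ 2)
      = ∫⁻ t, (Ι z.1 z.2).indicator (fun _ => ENNReal.ofReal |z.1 - z.2|) t
          * ENNReal.ofReal (h' t ^ 2) := by
    intro z
    rw [← lintegral_indicator measurableSet_uIoc, ← lintegral_const_mul _
      (hind_meas.indicator measurableSet_uIoc)]
    refine lintegral_congr fun t => ?_
    by_cases ht : t ∈ Ι z.1 z.2
    · rw [Set.indicator_of_mem ht, Set.indicator_of_mem ht]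
    · rw [Set.indicator_of_notMem ht, Set.indicator_of_notMem ht, mul_zero, zero_mul]
  -- measurability for the swap
  have hSmeas : MeasurableSet {p : (ℝ × ℝ) × ℝ | p.2 ∈ Ι p.1.1 p.1.2} := by
    have : {p : (ℝ × ℝ) × ℝ | p.2 ∈ Ι p.1.1 p.1.2}
        = {p : (ℝ × ℝ) × ℝ | p.1.1 ⊓ p.1.2 < p.2} ∩ {p : (ℝ × ℝ) × ℝ | p.2 ≤ p.1.1 ⊔ p.1.2} := by
      ext p; simp [Set.uIoc, Set.mem_Ioc]
    rw [this]
    exact (measurableSet_lt (measurable_fst.fst.min measurable_fst.snd) measurable_snd).inter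
      (measurableSet_le measurable_snd (measurable_fst.fst.max measurable_fst.snd))
  have hFmeas : Measurable (Function.uncurry fun (z : ℝ × ℝ) (t : ℝ) =>
      (Ι z.1 z.2).indicator (fun _ => ENNReal.ofReal |z.1 - z.2|) t
        * ENNReal.ofReal (h' t ^ 2)) := by
    have heq : (Function.uncurry fun (z : ℝ × ℝ) (t : ℝ) =>
        (Ι z.1 z.2).indicator (fun _ => ENNReal.ofReal |z.1 - z.2|) t
          * ENNReal.ofReal (h' t ^ 2))
        = Set.indicator {p : (ℝ × ℝ) × ℝ | p.2 ∈ Ι p.1.1 p.1.2}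
            (fun p => ENNReal.ofReal |p.1.1 - p.1.2| * ENNReal.ofReal (h' p.2 ^ 2)) := by
      funext p
      rcases p with ⟨z, t⟩
      by_cases ht : t ∈ Ι z.1 z.2
      · rw [Function.uncurry_apply_pair, Set.indicator_of_mem ht,
          Set.indicator_of_mem (by exact ht)]
      · rw [Function.uncurry_apply_pair, Set.indicator_of_notMem ht,
          Set.indicator_of_notMem (by exact ht), zero_mul]
    rw [heq]
    exact Measurable.indicator
      (((measurable_fst.fst.sub measurable_fst.snd).abs.ennreal_ofReal).mul
        ((hm'.comp measurable_snd).pow_const 2).ennreal_ofReal) hSmeas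
  have swap : ∫⁻ z : ℝ × ℝ, (∫⁻ t, (Ι z.1 z.2).indicator
        (fun _ => ENNReal.ofReal |z.1 - z.2|) t * ENNReal.ofReal (h' t ^ 2)) ∂pp
      = ∫⁻ t, (∫⁻ z : ℝ × ℝ, (Ι z.1 z.2).indicator
          (fun _ => ENNReal.ofReal |z.1 - z.2|) t * ENNReal.ofReal (h' t ^ 2) ∂pp) := by
    exact lintegral_lintegral_swap hFmeas.aemeasurable
  -- inner evaluation
  have inner_eval : ∀ t : ℝ, ∫⁻ z : ℝ × ℝ, (Ι z.1 z.2).indicator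
        (fun _ => ENNReal.ofReal |z.1 - z.2|) t * ENNReal.ofReal (h' t ^ 2) ∂pp
      = ENNReal.ofReal (2 * v * gaussianPDFReal m v t) * ENNReal.ofReal (h' t ^ 2) := by
    intro t
    have hzmeas : Measurable (fun z : ℝ × ℝ =>
        (Ι z.1 z.2).indicator (fun _ => ENNReal.ofReal |z.1 - z.2|) t) := by
      have heq : (fun z : ℝ × ℝ => (Ι z.1 z.2).indicator
          (fun _ => ENNReal.ofReal |z.1 - z.2|) t)
          = Set.indicator {z : ℝ × ℝ | t ∈ Ι z.1 z.2}
              (fun z => ENNReal.ofReal |z.1 - z.2|) := by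
        funext z
        by_cases ht : t ∈ Ι z.1 z.2
        · rw [Set.indicator_of_mem ht, Set.indicator_of_mem (by exact ht)]
        · rw [Set.indicator_of_notMem ht, Set.indicator_of_notMem (by exact ht)]
      rw [heq]
      refine Measurable.indicator ((measurable_fst.sub measurable_snd).abs.ennreal_ofReal) ?_
      have : {z : ℝ × ℝ | t ∈ Ι z.1 z.2}
          = {z : ℝ × ℝ | z.1 ⊓ z.2 < t} ∩ {z : ℝ × ℝ | t ≤ z.1 ⊔ z.2} := by
        ext z; simp [Set.uIoc, Set.mem_Ioc]
      rw [this]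
      exact (measurableSet_lt (measurable_fst.min measurable_snd) measurable_const).inter
        (measurableSet_le measurable_const (measurable_fst.max measurable_snd))
    rw [lintegral_mul_const _ hzmeas, W_eval m v hv t]
  -- final computation of the t-integral
  have final : ∫⁻ t, ENNReal.ofReal (2 * v * gaussianPDFReal m v t)
        * ENNReal.ofReal (h' t ^ 2)
      = ENNReal.ofReal (2 * v * ∫ x, h' x ^ 2 ∂μ) := by
    have e1 : ∀ t : ℝ, ENNReal.ofReal (2 * v * gaussianPDFReal m v t)
        * ENNReal.ofReal (h' t ^ 2)
        = ENNReal.ofReal (2 * v) * (gaussianPDF m v t * ENNReal.ofReal (h' t ^ 2)) := by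
      intro t
      rw [ENNReal.ofReal_mul (by positivity), mul_assoc]
      rfl
    simp_rw [e1]
    rw [lintegral_const_mul (f := fun t => gaussianPDF m v t * ENNReal.ofReal (h' t ^ 2)) _
      ((measurable_gaussianPDF m v).mul hind_meas)]
    have e2 : ∫⁻ t, gaussianPDF m v t * ENNReal.ofReal (h' t ^ 2)
        = ∫⁻ t, ENNReal.ofReal (h' t ^ 2) ∂μ := by
      rw [hμ, gaussianReal_of_var_ne_zero m hv,
        lintegral_withDensity_eq_lintegral_mul volume (measurable_gaussianPDF m v) hind_meas]
      rfl
    rw [e2, ← ofReal_integral_eq_lintegral_ofReal h'2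
      (Filter.Eventually.of_forall fun t => sq_nonneg _),
      ← ENNReal.ofReal_mul (by positivity)]
  -- put everything together
  have hbound : ∫⁻ z, ENNReal.ofReal ((h z.1 - h z.2)^2) ∂pp
      ≤ ENNReal.ofReal (2 * v * ∫ x, h' x ^ 2 ∂μ) := by
    refine le_trans step1 ?_
    rw [show (∫⁻ z : ℝ × ℝ, (ENNReal.ofReal |z.1 - z.2|
        * ∫⁻ t in Ι z.1 z.2, ENNReal.ofReal (h' t ^ 2)) ∂pp)
      = ∫⁻ z : ℝ × ℝ, (∫⁻ t, (Ι z.1 z.2).indicator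
          (fun _ => ENNReal.ofReal |z.1 - z.2|) t * ENNReal.ofReal (h' t ^ 2)) ∂pp
      from lintegral_congr fun z => step2 z]
    rw [swap]
    rw [show (∫⁻ t, (∫⁻ z : ℝ × ℝ, (Ι z.1 z.2).indicator
          (fun _ => ENNReal.ofReal |z.1 - z.2|) t * ENNReal.ofReal (h' t ^ 2) ∂pp))
      = ∫⁻ t, ENNReal.ofReal (2 * v * gaussianPDFReal m v t) * ENNReal.ofReal (h' t ^ 2)
      from lintegral_congr fun t => inner_eval t]
    rw [final]
  have h'2nn : 0 ≤ ∫ x, h' x ^ 2 ∂μ := integral_nonneg fun x => sq_nonneg _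
  have : 2 * ((∫ x, h x ^ 2 ∂μ) - (∫ x, h x ∂μ) ^ 2) ≤ 2 * v * ∫ x, h' x ^ 2 ∂μ := by
    rw [← varid, eqlint]
    calc (∫⁻ z, ENNReal.ofReal ((h z.1 - h z.2)^2) ∂pp).toReal
        ≤ (ENNReal.ofReal (2 * v * ∫ x, h' x ^ 2 ∂μ)).toReal :=
          ENNReal.toReal_mono ENNReal.ofReal_ne_top hbound
      _ = 2 * v * ∫ x, h' x ^ 2 ∂μ := ENNReal.toReal_ofReal (by positivity)
  linarith



lemma int_mul {μ : Measure ℝ} {f g : ℝ → ℝ} (hf : Measurable f) (hg : Measurable g)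
    (hf2 : Integrable (fun x => f x ^ 2) μ) (hg2 : Integrable (fun x => g x ^ 2) μ) :
    Integrable (fun x => f x * g x) μ := by
  refine ((hf2.add hg2).const_mul (1/2)).mono' ((hf.mul hg).aestronglyMeasurable)
    (Filter.Eventually.of_forall fun x => ?_)
  rw [Real.norm_eq_abs, abs_mul]
  simp only [Pi.add_apply]
  nlinarith [sq_nonneg (|f x| - |g x|), sq_abs (f x), sq_abs (g x), abs_nonneg (f x),
    abs_nonneg (g x)]


end OS

open OS

/-- The Olkin–Shepp matrix variance bound for the Gaussian: for `X ~ N(m, σ²)`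
and `f, g` locally absolutely continuous with square-integrable values and derivatives,
the matrix `σ²·[[E f'², E f'g'],[E f'g', E g'²]] − [[Var f, Cov(f,g)],[Cov(f,g), Var g]]`
is positive semidefinite. -/
theorem olkin_shepp_gaussian (m σ : ℝ) (hσ : 0 < σ)
    (f f' g g' : ℝ → ℝ)
    (hfmeas : Measurable f) (hf'meas : Measurable f')
    (hgmeas : Measurable g) (hg'meas : Measurable g')
    (hACf : HasAEDeriv f f') (hACg : HasAEDeriv g g')
    (hf2 : Integrable (fun x => f x ^ 2) (gaussianReal m ((σ ^ 2).toNNReal)))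
    (hg2 : Integrable (fun x => g x ^ 2) (gaussianReal m ((σ ^ 2).toNNReal)))
    (hf'2 : Integrable (fun x => f' x ^ 2) (gaussianReal m ((σ ^ 2).toNNReal)))
    (hg'2 : Integrable (fun x => g' x ^ 2) (gaussianReal m ((σ ^ 2).toNNReal))) :
    (σ ^ 2 •
        (!![∫ x, f' x ^ 2 ∂(gaussianReal m ((σ ^ 2).toNNReal)),
              ∫ x, f' x * g' x ∂(gaussianReal m ((σ ^ 2).toNNReal));
            ∫ x, f' x * g' x ∂(gaussianReal m ((σ ^ 2).toNNReal)),
              ∫ x, g' x ^ 2 ∂(gaussianReal m ((σ ^ 2).toNNReal))] : Matrix (Fin 2) (Fin 2) ℝ) -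
      (!![(∫ x, f x ^ 2 ∂(gaussianReal m ((σ ^ 2).toNNReal))) -
              (∫ x, f x ∂(gaussianReal m ((σ ^ 2).toNNReal))) ^ 2,
            (∫ x, f x * g x ∂(gaussianReal m ((σ ^ 2).toNNReal))) -
              (∫ x, f x ∂(gaussianReal m ((σ ^ 2).toNNReal))) *
                (∫ x, g x ∂(gaussianReal m ((σ ^ 2).toNNReal)));
            (∫ x, f x * g x ∂(gaussianReal m ((σ ^ 2).toNNReal))) -
              (∫ x, f x ∂(gaussianReal m ((σ ^ 2).toNNReal))) *
                (∫ x, g x ∂(gaussianReal m ((σ ^ 2).toNNReal))),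
            (∫ x, g x ^ 2 ∂(gaussianReal m ((σ ^ 2).toNNReal))) -
              (∫ x, g x ∂(gaussianReal m ((σ ^ 2).toNNReal))) ^ 2] :
          Matrix (Fin 2) (Fin 2) ℝ)).PosSemidef := by
  set v : ℝ≥0 := (σ ^ 2).toNNReal with hvdef
  have hv : v ≠ 0 := by
    simp only [hvdef, ne_eq, Real.toNNReal_eq_zero, not_le]
    positivity
  have hvcoe : (v : ℝ) = σ ^ 2 := Real.coe_toNNReal _ (by positivity)
  set μ := gaussianReal m v with hμ
  -- basic integrability
  have hfInt : Integrable f μ :=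
    ((memLp_two_iff_integrable_sq hfmeas.aestronglyMeasurable).2 hf2).integrable (by norm_num)
  have hgInt : Integrable g μ :=
    ((memLp_two_iff_integrable_sq hgmeas.aestronglyMeasurable).2 hg2).integrable (by norm_num)
  have hfg : Integrable (fun x => f x * g x) μ := int_mul hfmeas hgmeas hf2 hg2
  have hf'g' : Integrable (fun x => f' x * g' x) μ := int_mul hf'meas hg'meas hf'2 hg'2
  constructor
  · -- Hermitian
    ext i j
    fin_cases i <;> fin_cases j <;>
      simp [Matrix.conjTranspose_apply, Matrix.smul_apply, Matrix.sub_apply]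
  · intro x
    set a : ℝ := x 0 with ha
    set b : ℝ := x 1 with hb
    -- the combined function
    set h : ℝ → ℝ := fun y => a * f y + b * g y with hh
    set h' : ℝ → ℝ := fun y => a * f' y + b * g' y with hh'
    have hmh : Measurable h := (hfmeas.const_mul a).add (hgmeas.const_mul b)
    have hmh' : Measurable h' := (hf'meas.const_mul a).add (hg'meas.const_mul b)
    have hACh : HasAEDeriv h h' := by
      intro x' y'
      obtain ⟨hif, hef⟩ := hACf x' y'
      obtain ⟨hig, heg⟩ := hACg x' y'
      refine ⟨(hif.const_mul a).add (hig.const_mul b), ?_⟩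
      rw [intervalIntegral.integral_add (hif.const_mul a) (hig.const_mul b),
        intervalIntegral.integral_const_mul, intervalIntegral.integral_const_mul,
        ← hef, ← heg]
      simp only [hh]; ring
    have hh2 : Integrable (fun x => h x ^ 2) μ := by
      have : Integrable (fun x => a^2 * f x ^2 + (2*a*b) * (f x * g x) + b^2 * g x ^2) μ :=
        ((hf2.const_mul (a^2)).add (hfg.const_mul (2*a*b))).add (hg2.const_mul (b^2))
      exact this.congr (Filter.Eventually.of_forall fun x => by simp only [hh]; ring)
    have hh'2 : Integrable (fun x => h' x ^ 2) μ := by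
      have : Integrable (fun x => a^2 * f' x ^2 + (2*a*b) * (f' x * g' x) + b^2 * g' x ^2) μ :=
        ((hf'2.const_mul (a^2)).add (hf'g'.const_mul (2*a*b))).add (hg'2.const_mul (b^2))
      exact this.congr (Filter.Eventually.of_forall fun x => by simp only [hh']; ring)
    have key := poincare m v hv h h' hmh hmh' hACh hh2 hh'2
    have exp_int : ∀ (F G : ℝ → ℝ), Integrable (fun x => F x ^ 2) μ →
        Integrable (fun x => G x ^ 2) μ → Integrable (fun x => F x * G x) μ →
        ∫ x, (a * F x + b * G x) ^ 2 ∂μ = a^2 * (∫ x, F x ^ 2 ∂μ)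
          + (2*a*b) * (∫ x, F x * G x ∂μ) + b^2 * ∫ x, G x ^ 2 ∂μ := by
      intro F G hF2 hG2 hFG
      calc ∫ x, (a * F x + b * G x) ^ 2 ∂μ
          = ∫ x, (a^2 * F x ^ 2 + 2*a*b*(F x * G x) + b^2 * G x ^ 2) ∂μ := by
            congr 1; funext x; ring
        _ = ∫ x, (a^2 * F x ^ 2 + 2*a*b*(F x * G x)) ∂μ + ∫ x, b^2 * G x ^ 2 ∂μ :=
            integral_add ((hF2.const_mul _).add (hFG.const_mul _)) (hG2.const_mul _)
        _ = (∫ x, a^2 * F x ^ 2 ∂μ + ∫ x, 2*a*b*(F x * G x) ∂μ) + ∫ x, b^2 * G x ^ 2 ∂μ := by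
            rw [integral_add (hF2.const_mul _) (hFG.const_mul _)]
        _ = a^2 * (∫ x, F x ^ 2 ∂μ) + (2*a*b) * (∫ x, F x * G x ∂μ)
              + b^2 * ∫ x, G x ^ 2 ∂μ := by
            rw [integral_const_mul, integral_const_mul, integral_const_mul]
    -- expansions
    have eh : ∫ x, h x ∂μ = a * ∫ x, f x ∂μ + b * ∫ x, g x ∂μ := by
      rw [hh, ← integral_const_mul, ← integral_const_mul,
        ← integral_add (hfInt.const_mul a) (hgInt.const_mul b)]
    have eh2 : ∫ x, h x ^ 2 ∂μ = a^2 * (∫ x, f x ^2 ∂μ) + (2*a*b) * (∫ x, f x * g x ∂μ)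
        + b^2 * ∫ x, g x ^2 ∂μ := exp_int f g hf2 hg2 hfg
    have eh'2 : ∫ x, h' x ^ 2 ∂μ = a^2 * (∫ x, f' x ^2 ∂μ) + (2*a*b) * (∫ x, f' x * g' x ∂μ)
        + b^2 * ∫ x, g' x ^2 ∂μ := exp_int f' g' hf'2 hg'2 hf'g'
    rw [eh, eh2, eh'2] at key
    -- unfold the quadratic form
    simp only [Finsupp.sum_fintype, star_zero, zero_mul, mul_zero, Finset.sum_const_zero,
      implies_true]
    simp only [dotProduct, Matrix.mulVec, Matrix.sub_apply, Matrix.smul_apply,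
      Fin.sum_univ_two, Matrix.of_apply, Matrix.cons_val', Matrix.cons_val_zero,
      Matrix.cons_val_one, Matrix.head_cons, Matrix.empty_val', Matrix.cons_val_fin_one,
      Matrix.head_fin_const, smul_eq_mul, Pi.star_apply, star_trivial, ← ha, ← hb, ← hμ]
    rw [hvcoe] at key
    nlinarith [key]
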